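/- Let a be a Hopf monoid in a braided monoidal category C and let θ : 𝟙 → a be a left integral. Then the morphism a → a ⊗ a obtained as (μ ⊗ μ) ∘ (id_a ⊗ Ω ⊗ id_a) ∘ (id_a ⊗ S) ∘ δ (with the evident unitor and associator insertions, i.e. the morphism sending, in Sweedler-style notation, h to h₁·Ω¹ ⊗ Ω²·S(h₂)) is equal to Ω ∘ ε : a → a ⊗ a, where Ω := (id_a ⊗ S) ∘ δ ∘ θ. -/

import Mathlib

open CategoryTheory MonoidalCategory

universe v u

variable (C : Type u) [Category.{v} C] [MonoidalCategory C] [BraidedCategory C]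

/-- The middle-four interchange morphism, built from associators and the braiding,
used to equip the tensor product of two monoids with a monoid structure
`(μ ⊗ μ) ∘ (id ⊗ β ⊗ id)`. -/
def mid4 {C : Type u} [Category.{v} C] [MonoidalCategory C] [BraidedCategory C]
    (W X Y Z : C) : (W ⊗ X) ⊗ (Y ⊗ Z) ⟶ (W ⊗ Y) ⊗ (X ⊗ Z) :=
  (α_ W X (Y ⊗ Z)).hom ≫ (W ◁ (α_ X Y Z).inv) ≫ (W ◁ ((β_ X Y).hom ▷ Z)) ≫
    (W ◁ (α_ Y X Z).hom) ≫ (α_ W Y (X ⊗ Z)).inv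

/-- A Hopf monoid in a braided monoidal category `C`: an object `a` with a monoid
structure `(mul, one)`, a comonoid structure `(comul, counit)` which is a bimonoid
(`comul` and `counit` are monoid morphisms, where `a ⊗ a` carries the multiplication
`(mul ⊗ mul) ∘ (id ⊗ β ⊗ id)`), together with an antipode. -/
structure HopfMonoidIn where
  a : C
  mul : a ⊗ a ⟶ a
  one : 𝟙_ C ⟶ a
  comul : a ⟶ a ⊗ a
  counit : a ⟶ 𝟙_ C
  antipode : a ⟶ a
  mul_assoc' : (mul ⊗ₘ 𝟙 a) ≫ mul = (α_ a a a).hom ≫ (𝟙 a ⊗ₘ mul) ≫ mul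
  one_mul' : (λ_ a).inv ≫ (one ⊗ₘ 𝟙 a) ≫ mul = 𝟙 a
  mul_one' : (ρ_ a).inv ≫ (𝟙 a ⊗ₘ one) ≫ mul = 𝟙 a
  comul_coassoc' : comul ≫ (comul ⊗ₘ 𝟙 a) ≫ (α_ a a a).hom = comul ≫ (𝟙 a ⊗ₘ comul)
  counit_comul' : comul ≫ (counit ⊗ₘ 𝟙 a) ≫ (λ_ a).hom = 𝟙 a
  comul_counit' : comul ≫ (𝟙 a ⊗ₘ counit) ≫ (ρ_ a).hom = 𝟙 a
  mul_comul' : mul ≫ comul = (comul ⊗ₘ comul) ≫ mid4 a a a a ≫ (mul ⊗ₘ mul)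
  one_comul' : one ≫ comul = (λ_ (𝟙_ C)).inv ≫ (one ⊗ₘ one)
  mul_counit' : mul ≫ counit = (counit ⊗ₘ counit) ≫ (λ_ (𝟙_ C)).hom
  one_counit' : one ≫ counit = 𝟙 (𝟙_ C)
  antipode_left' : comul ≫ (antipode ⊗ₘ 𝟙 a) ≫ mul = counit ≫ one
  antipode_right' : comul ≫ (𝟙 a ⊗ₘ antipode) ≫ mul = counit ≫ one


open BraidedCategory in
/-- Auxiliary structural lemma: inserting a morphism `f : 𝟙 ⟶ u ⊗ v` out of the unit and
braiding `y` over `v` after `tensorμ` is the same as inserting `f` in the middle. -/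
private lemma key_insert {C : Type u} [Category.{v} C] [MonoidalCategory C] [BraidedCategory C]
    (x y u v : C) (f : 𝟙_ C ⟶ u ⊗ v) :
    (ρ_ (x ⊗ y)).inv ≫ ((x ⊗ y) ◁ f) ≫ tensorμ x y u v ≫ ((x ⊗ u) ◁ (β_ y v).hom) =
    (x ◁ (λ_ y).inv) ≫ (x ◁ (f ▷ y)) ≫ (α_ x (u ⊗ v) y).inv ≫ ((α_ x u v).inv ▷ y) ≫
      (α_ (x ⊗ u) v y).hom := by
  have h1 : tensorμ x y u v ≫ ((x ⊗ u) ◁ (β_ y v).hom) =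
      (α_ x y (u ⊗ v)).hom ≫ (x ◁ (β_ y (u ⊗ v)).hom) ≫ (x ◁ (α_ u v y).hom) ≫
        (α_ x u (v ⊗ y)).inv := by
    rw [braiding_tensor_right_hom]; dsimp only [tensorμ]; monoidal
  rw [h1]
  slice_lhs 2 3 => rw [associator_naturality_right]
  slice_lhs 3 4 => rw [← MonoidalCategory.whiskerLeft_comp, braiding_naturality_right,
    MonoidalCategory.whiskerLeft_comp]
  rw [braiding_tensorUnit_right]
  monoidal

/-- Abstract form of the main theorem, for any data satisfying the three identities used. -/
private lemma absorb_aux {C : Type u} [Category.{v} C] [MonoidalCategory C] [BraidedCategory C]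
    (a : C) (m : a ⊗ a ⟶ a) (d : a ⟶ a ⊗ a) (e : a ⟶ 𝟙_ C) (S : a ⟶ a) (θ : 𝟙_ C ⟶ a)
    (hθ : (ρ_ a).inv ≫ (a ◁ θ) ≫ m = e ≫ θ)
    (hS : m ≫ S = (S ⊗ₘ S) ≫ (β_ a a).hom ≫ m)
    (hmc : m ≫ d = (d ⊗ₘ d) ≫ tensorμ a a a a ≫ (m ⊗ₘ m)) :
    d ≫ (a ◁ S) ≫ (a ◁ (λ_ a).inv) ≫
        (a ◁ ((θ ≫ d ≫ (a ◁ S)) ▷ a)) ≫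
        (α_ a (a ⊗ a) a).inv ≫ ((α_ a a a).inv ▷ a) ≫
        (α_ (a ⊗ a) a a).hom ≫ (m ⊗ₘ m) =
      e ≫ (θ ≫ d ≫ (a ◁ S)) := by
  have stepC : (m ⊗ₘ m) ≫ (a ◁ S) =
      ((a ⊗ a) ◁ (S ⊗ₘ S)) ≫ ((a ⊗ a) ◁ (β_ a a).hom) ≫ (m ⊗ₘ m) := by
    rw [← MonoidalCategory.whiskerLeft_comp_assoc, ← id_tensorHom, ← id_tensorHom,
      tensorHom_comp_tensorHom, tensorHom_comp_tensorHom, Category.comp_id, Category.id_comp, hS, Category.assoc]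
  have stepD : tensorμ a a a a ≫ ((a ⊗ a) ◁ (S ⊗ₘ S)) =
      ((𝟙 a ⊗ₘ S) ⊗ₘ (𝟙 a ⊗ₘ S)) ≫ tensorμ a a a a := by
    rw [← id_tensorHom, ← id_tensorHom_id, ← tensorμ_natural]
  symm
  calc e ≫ (θ ≫ d ≫ (a ◁ S))
      = (ρ_ a).inv ≫ (a ◁ θ) ≫ m ≫ d ≫ (a ◁ S) := by
        rw [← Category.assoc e θ, ← hθ]; simp only [Category.assoc]
    _ = (ρ_ a).inv ≫ (a ◁ θ) ≫ (d ⊗ₘ d) ≫ tensorμ a a a a ≫ (m ⊗ₘ m) ≫ (a ◁ S) := by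
        rw [reassoc_of% hmc]
    _ = (ρ_ a).inv ≫ (a ◁ θ) ≫ (d ⊗ₘ d) ≫ ((𝟙 a ⊗ₘ S) ⊗ₘ (𝟙 a ⊗ₘ S)) ≫ tensorμ a a a a ≫
          ((a ⊗ a) ◁ (β_ a a).hom) ≫ (m ⊗ₘ m) := by
        rw [stepC]
        slice_lhs 4 5 => rw [stepD]
        simp only [Category.assoc]
    _ = (ρ_ a).inv ≫ ((d ≫ (a ◁ S)) ⊗ₘ (θ ≫ d ≫ (a ◁ S))) ≫ tensorμ a a a a ≫
          ((a ⊗ a) ◁ (β_ a a).hom) ≫ (m ⊗ₘ m) := by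
        slice_lhs 2 3 => rw [← id_tensorHom, tensorHom_comp_tensorHom, Category.id_comp]
        slice_lhs 2 3 => rw [tensorHom_comp_tensorHom]
        simp only [id_tensorHom, Category.assoc]
    _ = d ≫ (a ◁ S) ≫ (ρ_ (a ⊗ a)).inv ≫ ((a ⊗ a) ◁ (θ ≫ d ≫ (a ◁ S))) ≫ tensorμ a a a a ≫
          ((a ⊗ a) ◁ (β_ a a).hom) ≫ (m ⊗ₘ m) := by
        rw [tensorHom_def (d ≫ a ◁ S) (θ ≫ d ≫ a ◁ S)]
        simp only [Category.assoc]
        rw [← rightUnitor_inv_naturality_assoc]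
        simp only [Category.assoc]
    _ = d ≫ (a ◁ S) ≫ (a ◁ (λ_ a).inv) ≫ (a ◁ ((θ ≫ d ≫ (a ◁ S)) ▷ a)) ≫
          (α_ a (a ⊗ a) a).inv ≫ ((α_ a a a).inv ▷ a) ≫ (α_ (a ⊗ a) a a).hom ≫ (m ⊗ₘ m) := by
        rw [reassoc_of% key_insert a a a a (θ ≫ d ≫ (a ◁ S))]

namespace HopfMonoidIn

variable {C} (H : HopfMonoidIn C)

lemma mid4_eq_tensorμ (W X Y Z : C) : mid4 W X Y Z = tensorμ W X Y Z := rfl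

/-- The Hopf monoid object structure of a Hopf monoid. -/
def toHopfObj : HopfObj H.a where
  one := H.one
  mul := H.mul
  one_mul := by
    rw [← cancel_epi (λ_ H.a).inv]
    simpa [tensorHom_id] using H.one_mul'
  mul_one := by
    rw [← cancel_epi (ρ_ H.a).inv]
    simpa [id_tensorHom] using H.mul_one'
  mul_assoc := by simpa [tensorHom_id, id_tensorHom] using H.mul_assoc'
  counit := H.counit
  comul := H.comul
  counit_comul := by
    rw [← cancel_mono (λ_ H.a).hom]
    simpa [tensorHom_id] using H.counit_comul'
  comul_counit := by
    rw [← cancel_mono (ρ_ H.a).hom]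
    simpa [id_tensorHom] using H.comul_counit'
  comul_assoc := by simpa [tensorHom_id, id_tensorHom] using H.comul_coassoc'.symm
  mul_comul := by simpa [mid4_eq_tensorμ] using H.mul_comul'
  one_comul := H.one_comul'
  mul_counit := by simpa using H.mul_counit'
  one_counit := H.one_counit'
  antipode := H.antipode
  antipode_left := by simpa [tensorHom_id] using H.antipode_left'
  antipode_right := by simpa [id_tensorHom] using H.antipode_right'

end HopfMonoidIn

/-- For a Hopf monoid `a` in a braided monoidal category and a left integral
`θ : 𝟙 → a`, the morphism `a → a ⊗ a` sending (in Sweedler notation)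
`h` to `h₁·Ω¹ ⊗ Ω²·S(h₂)` equals `Ω ∘ ε`, where `Ω := (id ⊗ S) ∘ δ ∘ θ`. -/
theorem hopf_monoid_Omega_absorbs (H : HopfMonoidIn C)
    (θ : 𝟙_ C ⟶ H.a)
    (hθ : (ρ_ H.a).inv ≫ (𝟙 H.a ⊗ₘ θ) ≫ H.mul = H.counit ≫ θ) :
    H.comul ≫ (𝟙 H.a ⊗ₘ H.antipode) ≫ (H.a ◁ (λ_ H.a).inv) ≫
        (H.a ◁ ((θ ≫ H.comul ≫ (𝟙 H.a ⊗ₘ H.antipode)) ▷ H.a)) ≫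
        (α_ H.a (H.a ⊗ H.a) H.a).inv ≫ ((α_ H.a H.a H.a).inv ▷ H.a) ≫
        (α_ (H.a ⊗ H.a) H.a H.a).hom ≫ (H.mul ⊗ₘ H.mul) =
      H.counit ≫ (θ ≫ H.comul ≫ (𝟙 H.a ⊗ₘ H.antipode)) := by
  have hS : H.mul ≫ H.antipode = (H.antipode ⊗ₘ H.antipode) ≫ (β_ H.a H.a).hom ≫ H.mul :=
    @HopfObj.mul_antipode C _ _ _ H.a H.toHopfObj
  have hmc : H.mul ≫ H.comul =
      (H.comul ⊗ₘ H.comul) ≫ tensorμ H.a H.a H.a H.a ≫ (H.mul ⊗ₘ H.mul) := by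
    rw [H.mul_comul', HopfMonoidIn.mid4_eq_tensorμ]
  simp only [id_tensorHom] at hθ ⊢
  exact absorb_aux H.a H.mul H.comul H.counit H.antipode θ hθ hS hmc
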